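/- Define Ĵ_r^+(s) := (2π)^{−s}·Γ(s/2 + ir)·Γ(s/2 − ir)·cos(πs/2) and Ĵ_r^−(s) := (2π)^{−s}·Γ(s/2 + ir)·Γ(s/2 − ir)·cosh(πr). Let r ∈ ℂ with 2ir ∉ ℤ and let n be a nonnegative integer. Then lim_{s → 2(ir−n)} (s − 2(ir−n))·Ĵ_r^+(s) = (2/n!)·(2π)^{2n−2ir}·Γ(2ir − n)·cosh(πr), and lim_{s → 2(ir−n)} (s − 2(ir−n))·Ĵ_r^−(s) = ((−1)^n·2/n!)·(2π)^{2n−2ir}·Γ(2ir − n)·cosh(πr); in particular, the residue of Ĵ_r^+ at s = 2(ir − n) equals (−1)^n times the residue of Ĵ_r^− at the same point. -/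

import Mathlib

open Complex Real Filter

/-- The Mellin transform `Ĵ_r^+(s) = (2π)^{-s} Γ(s/2 + ir) Γ(s/2 − ir) cos(πs/2)`. -/
noncomputable def Jhatplus (r s : ℂ) : ℂ :=
  (2 * (π : ℂ)) ^ (-s) * Complex.Gamma (s / 2 + I * r) * Complex.Gamma (s / 2 - I * r) *
    Complex.cos ((π : ℂ) * s / 2)

/-- The Mellin transform `Ĵ_r^−(s) = (2π)^{-s} Γ(s/2 + ir) Γ(s/2 − ir) cosh(πr)`. -/
noncomputable def Jhatminus (r s : ℂ) : ℂ :=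
  (2 * (π : ℂ)) ^ (-s) * Complex.Gamma (s / 2 + I * r) * Complex.Gamma (s / 2 - I * r) *
    Complex.cosh ((π : ℂ) * r)

open Topology

lemma gamma_res (n : ℕ) :
    Tendsto (fun z : ℂ => (z + n) * Complex.Gamma z) (𝓝[≠] (-(n : ℂ)))
      (𝓝 ((-1) ^ n / n.factorial)) := by
  induction n with
  | zero => simpa using Complex.tendsto_self_mul_Gamma_nhds_zero
  | succ n ih =>
      have h0 : (-((n : ℂ) + 1)) ≠ 0 := by
        intro h
        have : (n : ℂ) + 1 = 0 := by linear_combination -h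
        exact_mod_cast Nat.cast_add_one_ne_zero (R := ℂ) n this
      have hmap : Tendsto (fun z : ℂ => z + 1) (𝓝[≠] (-((n : ℂ) + 1))) (𝓝[≠] (-(n : ℂ))) := by
        rw [tendsto_nhdsWithin_iff]
        refine ⟨?_, ?_⟩
        · have := ((continuous_id.add (continuous_const (y := (1:ℂ)))).tendsto
            (-((n : ℂ) + 1))).mono_left (nhdsWithin_le_nhds (s := {-((n : ℂ) + 1)}ᶜ))
          have e : -((n : ℂ) + 1) + 1 = -(n : ℂ) := by ring
          simpa [e, Pi.add_def] using this
        · filter_upwards [self_mem_nhdsWithin] with z hz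
          simp only [Set.mem_compl_iff, Set.mem_singleton_iff] at hz ⊢
          intro h; exact hz (by linear_combination h)
      have h1 : Tendsto (fun z : ℂ => (z + 1 + n) * Complex.Gamma (z + 1))
          (𝓝[≠] (-((n : ℂ) + 1))) (𝓝 ((-1) ^ n / n.factorial)) := by
        exact (ih.comp hmap)
      have h2 : Tendsto (fun z : ℂ => z⁻¹) (𝓝[≠] (-((n : ℂ) + 1))) (𝓝 (-((n : ℂ) + 1))⁻¹) :=
        (tendsto_inv₀ h0).mono_left nhdsWithin_le_nhds
      have h3 := h1.mul h2
      have hev : ∀ᶠ z : ℂ in 𝓝[≠] (-((n : ℂ) + 1)), z ≠ 0 :=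
        (eventually_ne_nhds (by simpa using h0)).filter_mono nhdsWithin_le_nhds
      have h4 : Tendsto (fun z : ℂ => (z + ((n : ℂ) + 1)) * Complex.Gamma z)
          (𝓝[≠] (-((n : ℂ) + 1))) (𝓝 ((-1) ^ n / n.factorial * (-((n : ℂ) + 1))⁻¹)) := by
        refine h3.congr' ?_
        filter_upwards [hev] with z hz
        rw [Complex.Gamma_add_one z hz]
        field_simp
        ring
      have e2 : ((-1 : ℂ)) ^ n / n.factorial * (-((n : ℂ) + 1))⁻¹
          = (-1) ^ (n + 1) / (n + 1).factorial := by
        have hf : ((n.factorial : ℂ)) ≠ 0 := by exact_mod_cast n.factorial_ne_zero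
        have hn1 : ((n : ℂ) + 1) ≠ 0 := Nat.cast_add_one_ne_zero n
        rw [pow_succ, Nat.factorial_succ]
        push_cast
        rw [inv_neg, mul_neg, div_mul_eq_mul_div]
        field_simp
      have : -(((n + 1 : ℕ) : ℂ)) = -((n : ℂ) + 1) := by push_cast; ring
      have hfun : (fun z : ℂ => (z + ((n + 1 : ℕ) : ℂ)) * Complex.Gamma z)
          = fun z : ℂ => (z + ((n : ℂ) + 1)) * Complex.Gamma z := by push_cast; rfl
      rw [this, hfun, ← e2]
      exact h4

set_option maxHeartbeats 1000000 in
lemma key_lim (r : ℂ) (hr : ∀ k : ℤ, 2 * I * r ≠ (k : ℂ)) (n : ℕ) (F : ℂ → ℂ)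
    (hF : ContinuousAt F (2 * (I * r - (n : ℂ)))) :
    Tendsto (fun s : ℂ => (s - 2 * (I * r - (n : ℂ))) *
        ((2 * (Real.pi : ℂ)) ^ (-s) * Complex.Gamma (s / 2 + I * r) *
          Complex.Gamma (s / 2 - I * r) * F s))
      (𝓝[≠] (2 * (I * r - (n : ℂ))))
      (𝓝 ((2 * (Real.pi : ℂ)) ^ ((2 * n : ℂ) - 2 * I * r) *
        Complex.Gamma (2 * I * r - (n : ℂ)) * F (2 * (I * r - (n : ℂ))) *
        (2 * ((-1) ^ n / n.factorial)))) := by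
  set s₀ : ℂ := 2 * (I * r - (n : ℂ)) with hs₀
  have hmap : Tendsto (fun s : ℂ => s / 2 - I * r) (𝓝[≠] s₀) (𝓝[≠] (-(n : ℂ))) := by
    rw [tendsto_nhdsWithin_iff]
    constructor
    · have hc : Tendsto (fun s : ℂ => s / 2 - I * r) (𝓝 s₀) (𝓝 (s₀ / 2 - I * r)) :=
        ((continuous_id.div_const 2).sub continuous_const).tendsto s₀
      have he : s₀ / 2 - I * r = -(n : ℂ) := by rw [hs₀]; ring
      rw [he] at hc
      exact hc.mono_left nhdsWithin_le_nhds
    · filter_upwards [self_mem_nhdsWithin] with z hz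
      simp only [Set.mem_compl_iff, Set.mem_singleton_iff] at hz ⊢
      intro h; exact hz (by rw [hs₀]; linear_combination 2 * h)
  have hA : Tendsto (fun s : ℂ => (s - s₀) * Complex.Gamma (s / 2 - I * r)) (𝓝[≠] s₀)
      (𝓝 (2 * ((-1) ^ n / n.factorial))) := by
    have h := ((gamma_res n).comp hmap).const_mul (2 : ℂ)
    refine h.congr fun s => ?_
    show 2 * ((s / 2 - I * r + n) * Complex.Gamma (s / 2 - I * r)) = _
    rw [hs₀]; ring
  have h2pi : (2 * (Real.pi : ℂ)) ≠ 0 :=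
    mul_ne_zero two_ne_zero (ofReal_ne_zero.mpr Real.pi_ne_zero)
  have hB : ContinuousAt (fun s : ℂ => (2 * (Real.pi : ℂ)) ^ (-s) *
      Complex.Gamma (s / 2 + I * r) * F s) s₀ := by
    refine (ContinuousAt.mul (ContinuousAt.mul ?_ ?_) hF)
    · exact (continuous_neg.const_cpow (Or.inl h2pi)).continuousAt
    · have harg : s₀ / 2 + I * r = 2 * I * r - (n : ℂ) := by rw [hs₀]; ring
      have hg : ContinuousAt Complex.Gamma (s₀ / 2 + I * r) := by
        rw [harg]
        refine (Complex.differentiableAt_Gamma _ fun m => ?_).continuousAt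
        intro hm
        exact hr ((n : ℤ) - (m : ℤ)) (by push_cast; linear_combination hm)
      have hinner : ContinuousAt (fun s : ℂ => s / 2 + I * r) s₀ := by fun_prop
      exact ContinuousAt.comp (f := fun s : ℂ => s / 2 + I * r) hg hinner
  have hB' := (hB.tendsto.mono_left nhdsWithin_le_nhds).mul hA
  have heq : (fun s : ℂ => ((2 * (Real.pi : ℂ)) ^ (-s) * Complex.Gamma (s / 2 + I * r) * F s) *
      ((s - s₀) * Complex.Gamma (s / 2 - I * r)))
      = fun s : ℂ => (s - s₀) * ((2 * (Real.pi : ℂ)) ^ (-s) * Complex.Gamma (s / 2 + I * r) *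
        Complex.Gamma (s / 2 - I * r) * F s) := by
    funext s; ring
  rw [heq] at hB'
  have hexp : -s₀ = (2 * n : ℂ) - 2 * I * r := by rw [hs₀]; ring
  have harg : s₀ / 2 + I * r = 2 * I * r - (n : ℂ) := by rw [hs₀]; ring
  rw [hexp, harg] at hB'
  convert hB' using 2

lemma cos_val (r : ℂ) (n : ℕ) :
    Complex.cos ((Real.pi : ℂ) * (2 * (I * r - (n : ℂ))) / 2)
      = (-1) ^ n * Complex.cosh ((Real.pi : ℂ) * r) := by
  have h1 : (Real.pi : ℂ) * (2 * (I * r - (n : ℂ))) / 2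
      = (Real.pi : ℂ) * r * I - (((n : ℝ) * Real.pi : ℝ) : ℂ) := by push_cast; ring
  rw [h1, Complex.cos_sub, Complex.cos_mul_I]
  have hs : Complex.sin ((((n : ℝ) * Real.pi : ℝ)) : ℂ) = 0 := by
    rw [← Complex.ofReal_sin, Real.sin_nat_mul_pi]; simp
  have hc : Complex.cos ((((n : ℝ) * Real.pi : ℝ)) : ℂ) = (-1) ^ n := by
    rw [← Complex.ofReal_cos]
    have := Real.cos_nat_mul_pi_sub 0 n
    simp only [sub_zero, Real.cos_zero, mul_one] at this
    rw [this]; push_cast; ring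
  rw [hs, hc]; ring

/-- Residues of `Ĵ_r^±` at `s = 2(ir − n)` for `2ir ∉ ℤ`:
`lim_{s → 2(ir−n)} (s − 2(ir−n)) Ĵ_r^+(s) = (2/n!) (2π)^{2n−2ir} Γ(2ir−n) cosh(πr)` and
`lim_{s → 2(ir−n)} (s − 2(ir−n)) Ĵ_r^−(s) = ((−1)ⁿ 2/n!) (2π)^{2n−2ir} Γ(2ir−n) cosh(πr)`. -/
theorem stmt_11 (r : ℂ) (hr : ∀ k : ℤ, 2 * I * r ≠ (k : ℂ)) (n : ℕ) :
    Tendsto (fun s : ℂ => (s - 2 * (I * r - (n : ℂ))) * Jhatplus r s)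
      (nhdsWithin (2 * (I * r - (n : ℂ))) {2 * (I * r - (n : ℂ))}ᶜ)
      (nhds ((2 / (n.factorial : ℂ)) * (2 * (π : ℂ)) ^ ((2 * n : ℂ) - 2 * I * r) *
        Complex.Gamma (2 * I * r - (n : ℂ)) * Complex.cosh ((π : ℂ) * r))) ∧
    Tendsto (fun s : ℂ => (s - 2 * (I * r - (n : ℂ))) * Jhatminus r s)
      (nhdsWithin (2 * (I * r - (n : ℂ))) {2 * (I * r - (n : ℂ))}ᶜ)
      (nhds (((-1) ^ n * 2 / (n.factorial : ℂ)) * (2 * (π : ℂ)) ^ ((2 * n : ℂ) - 2 * I * r) *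
        Complex.Gamma (2 * I * r - (n : ℂ)) * Complex.cosh ((π : ℂ) * r))) := by
  have hsq : ((-1 : ℂ)) ^ n * (-1) ^ n = 1 := by rw [← mul_pow]; norm_num
  constructor
  · have hF : ContinuousAt (fun s : ℂ => Complex.cos ((Real.pi : ℂ) * s / 2))
        (2 * (I * r - (n : ℂ))) := by fun_prop
    have h := key_lim r hr n _ hF
    rw [cos_val] at h
    simp only [Jhatplus]
    convert h using 2
    linear_combination (-(2 / (n.factorial : ℂ)) *
      (2 * (Real.pi : ℂ)) ^ ((2 * n : ℂ) - 2 * I * r) *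
      Complex.Gamma (2 * I * r - (n : ℂ)) * Complex.cosh ((Real.pi : ℂ) * r)) * hsq
  · have hF : ContinuousAt (fun _ : ℂ => Complex.cosh ((Real.pi : ℂ) * r))
        (2 * (I * r - (n : ℂ))) := continuousAt_const
    have h := key_lim r hr n _ hF
    simp only [Jhatminus]
    convert h using 2
    ring
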